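/- Assume (A1) the optimality set OPT(b) is non-empty and bounded, and (B2) ℙ(OPT(b_n) ≠ ∅) → 1. Suppose the random vectors b_n are consistent estimators of b with ‖b_n − b‖ = O_ℙ(r_n^{-1}), i.e. for every ε > 0 there exist M > 0 and N such that ℙ(r_n‖b_n − b‖ > M) < ε for all n ≥ N. Then the Hausdorff distance between the empirical and true optimality sets satisfies d_H(OPT(b_n), OPT(b)) = O_ℙ(r_n^{-1}), i.e. for every ε > 0 there exist M > 0 and N such that ℙ(r_n · d_H(OPT(b_n), OPT(b)) > M) < ε for all n ≥ N. -/

import Mathlib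

open Matrix

noncomputable section

variable {m d : ℕ}

/-- The primal feasible set `P(b) = {x : A x = b, x ≥ 0}`. -/
def feasSet (A : Matrix (Fin m) (Fin d) ℝ) (b : Fin m → ℝ) : Set (Fin d → ℝ) :=
  {x | A *ᵥ x = b ∧ ∀ i, 0 ≤ x i}

/-- The optimality set `OPT(b)` of the primal program `(P_b)`. -/
def optSet (A : Matrix (Fin m) (Fin d) ℝ) (b : Fin m → ℝ) (c : Fin d → ℝ) :
    Set (Fin d → ℝ) :=
  {x | x ∈ feasSet A b ∧ ∀ y ∈ feasSet A b, c ⬝ᵥ x ≤ c ⬝ᵥ y}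

/-- The dual feasible set `{λ : Aᵀ λ ≤ c}`. -/
def dualFeasSet (A : Matrix (Fin m) (Fin d) ℝ) (c : Fin d → ℝ) : Set (Fin m → ℝ) :=
  {l | ∀ j, (Aᵀ *ᵥ l) j ≤ c j}

/-- The set of optimal solutions of the dual program `(D_b)`. -/
def dualOptSet (A : Matrix (Fin m) (Fin d) ℝ) (b : Fin m → ℝ) (c : Fin d → ℝ) :
    Set (Fin m → ℝ) :=
  {l | l ∈ dualFeasSet A c ∧ ∀ mu ∈ dualFeasSet A c, b ⬝ᵥ mu ≤ b ⬝ᵥ l}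

/-- The submatrix `A_I` of the columns indexed by `I`, where the subset
`I ⊆ {1,…,d}` of cardinality `m` is encoded by the strictly monotone
enumeration `e : Fin m → Fin d` of its elements. -/
def subMat (A : Matrix (Fin m) (Fin d) ℝ) (e : Fin m → Fin d) :
    Matrix (Fin m) (Fin m) ℝ :=
  A.submatrix id e

/-- `e` encodes a basis: a subset of size `m` of the columns (strictly monotone
enumeration) whose corresponding submatrix `A_I` is invertible. -/
def IsBasis (A : Matrix (Fin m) (Fin d) ℝ) (e : Fin m → Fin d) : Prop :=
  StrictMono e ∧ IsUnit (subMat A e).det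

/-- The primal basic solution `x(I, v)`: equal to `(A_I)⁻¹ v` on the coordinates
in `I` and `0` elsewhere. -/
def basicSol (A : Matrix (Fin m) (Fin d) ℝ) (e : Fin m → Fin d) (v : Fin m → ℝ) :
    Fin d → ℝ :=
  fun i => ∑ j, if e j = i then ((subMat A e)⁻¹ *ᵥ v) j else 0

/-- The dual basic solution `λ(I) = (A_I)⁻ᵀ c_I`. -/
def dualSol (A : Matrix (Fin m) (Fin d) ℝ) (c : Fin d → ℝ) (e : Fin m → Fin d) :
    Fin m → ℝ :=
  ((subMat A e)ᵀ)⁻¹ *ᵥ fun j => c (e j)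

/-- `I` is a dual feasible basis: `Aᵀ λ(I) ≤ c`. -/
def DualFeasibleBasis (A : Matrix (Fin m) (Fin d) ℝ) (c : Fin d → ℝ)
    (e : Fin m → Fin d) : Prop :=
  IsBasis A e ∧ ∀ j, (Aᵀ *ᵥ dualSol A c e) j ≤ c j

/-- `I` is a primal feasible basis for `(P_b)`: `x(I,b) ≥ 0`. -/
def PrimalFeasibleBasis (A : Matrix (Fin m) (Fin d) ℝ) (b : Fin m → ℝ)
    (e : Fin m → Fin d) : Prop :=
  IsBasis A e ∧ ∀ i, 0 ≤ basicSol A e b i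


section LPMachinery
open scoped RealInnerProductSpace
set_option linter.unusedSectionVars false
namespace LPStab


variable {E : Type*} [NormedAddCommGroup E] [InnerProductSpace ℝ E] [FiniteDimensional ℝ E]
variable {ι : Type*} [Fintype ι]

lemma ker_eq_bot_of_li {s : Finset ι} (u : ι → E)
    (h : LinearIndependent ℝ (fun i : s => u i)) :
    LinearMap.ker (Fintype.linearCombination ℝ (fun i : s => u i)) = ⊥ := by
  rw [LinearMap.ker_eq_bot']
  intro g hg
  rw [Fintype.linearCombination_apply] at hg
  have := Fintype.linearIndependent_iff.1 h g hg
  funext i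
  exact this i

lemma sum_extend {M : Type*} [AddCommMonoid M] (s : Finset ι) (f : ι → M)
    (hf : ∀ i ∉ s, f i = 0) : ∑ i, f i = ∑ i : s, f i := by
  rw [Finset.sum_coe_sort s f]
  exact (Finset.sum_subset s.subset_univ (fun i _ hi => hf i hi)).symm

lemma exists_sum_bound (u : ι → E) :
    ∃ K : ℝ, 0 < K ∧ ∀ s : Finset ι, LinearIndependent ℝ (fun i : s => u i) →
      ∀ lam : ι → ℝ, (∀ i ∉ s, lam i = 0) →
        ∑ i, lam i ≤ K * ‖∑ i, lam i • u i‖ := by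
  classical
  have key : ∀ s : Finset ι, ∃ K : ℝ, 0 < K ∧ (LinearIndependent ℝ (fun i : s => u i) →
      ∀ lam : ι → ℝ, (∀ i ∉ s, lam i = 0) → ∑ i, lam i ≤ K * ‖∑ i, lam i • u i‖) := by
    intro s
    by_cases hind : LinearIndependent ℝ (fun i : s => u i)
    · set T := Fintype.linearCombination ℝ (fun i : s => u i) with hT
      obtain ⟨g, hg⟩ := T.exists_leftInverse_of_injective (ker_eq_bot_of_li u hind)
      set G := LinearMap.toContinuousLinearMap g with hG
      refine ⟨s.card * ‖G‖ + 1, by positivity, fun _ lam hlam => ?_⟩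
      set lam' : s → ℝ := fun i => lam i with hlam'
      have hTl : T lam' = ∑ i, lam i • u i := by
        rw [hT, Fintype.linearCombination_apply]
        rw [sum_extend s (fun i => lam i • u i) (fun i hi => by simp [hlam i hi])]
      have hginv : g (T lam') = lam' := by
        have := congrArg (fun (h : (s → ℝ) →ₗ[ℝ] (s → ℝ)) => h lam') hg
        simpa using this
      have hnorm : ‖lam'‖ ≤ ‖G‖ * ‖T lam'‖ := by
        calc ‖lam'‖ = ‖G (T lam')‖ := by
              rw [show G (T lam') = g (T lam') from rfl, hginv]
        _ ≤ ‖G‖ * ‖T lam'‖ := G.le_opNorm _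
      have hsum : ∑ i, lam i ≤ s.card * ‖lam'‖ := by
        rw [sum_extend s lam hlam]
        calc ∑ i : s, lam' i ≤ ∑ _i : s, ‖lam'‖ := Finset.sum_le_sum (fun i _ => by
              calc lam' i ≤ |lam' i| := le_abs_self _
              _ ≤ ‖lam'‖ := by simpa [Real.norm_eq_abs] using norm_le_pi_norm lam' i)
        _ = s.card * ‖lam'‖ := by simp [mul_comm]
      calc ∑ i, lam i ≤ s.card * ‖lam'‖ := hsum
      _ ≤ s.card * (‖G‖ * ‖T lam'‖) := mul_le_mul_of_nonneg_left hnorm (by positivity)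
      _ = (s.card * ‖G‖) * ‖T lam'‖ := by ring
      _ ≤ (s.card * ‖G‖ + 1) * ‖T lam'‖ :=
            mul_le_mul_of_nonneg_right (by linarith) (norm_nonneg _)
      _ = (s.card * ‖G‖ + 1) * ‖∑ i, lam i • u i‖ := by rw [hTl]
    · exact ⟨1, one_pos, fun h => absurd h hind⟩
  choose K hK using key
  refine ⟨∑ s, K s, Finset.sum_pos (fun s _ => (hK s).1) Finset.univ_nonempty, ?_⟩
  intro s hind lam hlam
  calc ∑ i, lam i ≤ K s * ‖∑ i, lam i • u i‖ := (hK s).2 hind lam hlam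
  _ ≤ (∑ t, K t) * ‖∑ i, lam i • u i‖ :=
      mul_le_mul_of_nonneg_right
        (Finset.single_le_sum (fun t _ => (hK t).1.le) (Finset.mem_univ s)) (norm_nonneg _)
lemma cone_caratheodory (u : ι → E) (J : Finset ι) :
    ∀ lam : ι → ℝ, (∀ i, 0 ≤ lam i) → (∀ i ∉ J, lam i = 0) →
    ∃ s : Finset ι, s ⊆ J ∧ LinearIndependent ℝ (fun i : s => u i) ∧
      ∃ lam' : ι → ℝ, (∀ i, 0 ≤ lam' i) ∧ (∀ i ∉ s, lam' i = 0) ∧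
        ∑ i, lam' i • u i = ∑ i, lam i • u i := by
  classical
  induction J using Finset.strongInduction with
  | _ J ih =>
    intro lam h0 hsupp
    by_cases hind : LinearIndependent ℝ (fun i : J => u i)
    · exact ⟨J, Finset.Subset.refl J, hind, lam, h0, hsupp, rfl⟩
    obtain ⟨g, hgsum, i₁, hi₁⟩ := Fintype.not_linearIndependent_iff.1 hind
    set gg : ι → ℝ := fun i => if h : i ∈ J then g ⟨i, h⟩ else 0 with hgg
    have hggJ : ∀ (i : ι) (h : i ∈ J), gg i = g ⟨i, h⟩ := by
      intro i h; simp [hgg, h]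
    have hggsupp : ∀ i ∉ J, gg i = 0 := fun i hi => by simp [hgg, hi]
    have hggsum : ∑ i, gg i • u i = 0 := by
      rw [sum_extend J (fun i => gg i • u i) (fun i hi => by simp [hggsupp i hi])]
      rw [← hgsum]
      apply Finset.sum_congr rfl
      intro i _
      rw [hggJ i i.2]
    have hgg₁ : gg ↑i₁ = g i₁ := by rw [hggJ _ i₁.2]
    obtain ⟨g', hg'sum, hg'supp, i₂, hi₂J, hi₂pos⟩ :
        ∃ g' : ι → ℝ, ∑ i, g' i • u i = 0 ∧ (∀ i ∉ J, g' i = 0) ∧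
          ∃ i₂, i₂ ∈ J ∧ 0 < g' i₂ := by
      rcases hi₁.lt_or_gt with h | h
      · refine ⟨-gg, by simp [hggsum], fun i hi => by simp [hggsupp i hi], i₁, i₁.2, ?_⟩
        simp only [Pi.neg_apply, hgg₁]
        linarith
      · exact ⟨gg, hggsum, hggsupp, i₁, i₁.2, by rw [hgg₁]; exact h⟩
    set Tf : Finset ι := J.filter (fun i => 0 < g' i) with hTf
    have hTne : Tf.Nonempty := ⟨i₂, Finset.mem_filter.2 ⟨hi₂J, hi₂pos⟩⟩
    set t : ℝ := Tf.inf' hTne (fun i => lam i / g' i) with ht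
    have ht0 : 0 ≤ t :=
      Finset.le_inf' hTne _ (fun i hi => div_nonneg (h0 i) (Finset.mem_filter.1 hi).2.le)
    obtain ⟨i₀, hi₀T, hi₀⟩ := Finset.exists_mem_eq_inf' hTne (fun i => lam i / g' i)
    have hi₀J : i₀ ∈ J := (Finset.mem_filter.1 hi₀T).1
    have hi₀pos : 0 < g' i₀ := (Finset.mem_filter.1 hi₀T).2
    set lam'' : ι → ℝ := fun i => lam i - t * g' i with hlam''
    have h0'' : ∀ i, 0 ≤ lam'' i := by
      intro i
      by_cases hiJ : i ∈ J
      · by_cases hip : 0 < g' i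
        · have hit : t ≤ lam i / g' i := Finset.inf'_le _ (Finset.mem_filter.2 ⟨hiJ, hip⟩)
          have h2 := (le_div_iff₀ hip).1 hit
          simp only [hlam'']
          linarith
        · push_neg at hip
          have h3 : t * g' i ≤ 0 := mul_nonpos_iff.2 (Or.inl ⟨ht0, hip⟩)
          simp only [hlam'']
          have := h0 i
          linarith
      · simp [hlam'', hsupp i hiJ, hg'supp i hiJ]
    have hzero : lam'' i₀ = 0 := by
      show lam i₀ - t * g' i₀ = 0
      rw [ht, hi₀]
      field_simp
      ring
    have hsupp'' : ∀ i ∉ J.erase i₀, lam'' i = 0 := by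
      intro i hi
      by_cases hiJ : i ∈ J
      · have : i = i₀ := by
          by_contra hne
          exact hi (Finset.mem_erase.2 ⟨hne, hiJ⟩)
        rw [this]; exact hzero
      · simp [hlam'', hsupp i hiJ, hg'supp i hiJ]
    have hsum'' : ∑ i, lam'' i • u i = ∑ i, lam i • u i := by
      simp only [hlam'', sub_smul, Finset.sum_sub_distrib, mul_smul]
      rw [← Finset.smul_sum, hg'sum, smul_zero, sub_zero]
    obtain ⟨s, hs1, hs2, lam3, h3, hsupp3, hsum3⟩ :=
      ih (J.erase i₀) (Finset.erase_ssubset hi₀J) lam'' h0'' hsupp''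
    exact ⟨s, hs1.trans (Finset.erase_subset _ _), hs2, lam3, h3, hsupp3, hsum3.trans hsum''⟩
lemma mem_cone_of_dual (u : ι → E) (J : Finset ι) (w : E)
    (hw : ∀ h : E, (∀ i ∈ J, ⟪u i, h⟫ ≤ 0) → ⟪w, h⟫ ≤ 0) :
    ∃ lam : ι → ℝ, (∀ i, 0 ≤ lam i) ∧ (∀ i ∉ J, lam i = 0) ∧ w = ∑ i, lam i • u i := by
  classical
  set C : Set E := {y | ∃ lam : ι → ℝ, (∀ i, 0 ≤ lam i) ∧ (∀ i ∉ J, lam i = 0) ∧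
    y = ∑ i, lam i • u i} with hC
  by_contra hnot
  have hwC : w ∉ C := hnot
  have h0C : (0 : E) ∈ C := ⟨0, fun i => le_refl 0, fun i _ => rfl, by simp⟩
  have hsmul : ∀ (a : ℝ), 0 ≤ a → ∀ y ∈ C, a • y ∈ C := by
    rintro a ha y ⟨lam, h1, h2, h3⟩
    exact ⟨fun i => a * lam i, fun i => mul_nonneg ha (h1 i), fun i hi => by simp [h2 i hi],
      by rw [h3, Finset.smul_sum]; simp [mul_smul]⟩
  have hconv : Convex ℝ C := by
    rintro y₁ ⟨l₁, h₁0, h₁s, h₁e⟩ y₂ ⟨l₂, h₂0, h₂s, h₂e⟩ a b ha hb hab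
    refine ⟨fun i => a * l₁ i + b * l₂ i,
      fun i => add_nonneg (mul_nonneg ha (h₁0 i)) (mul_nonneg hb (h₂0 i)),
      fun i hi => by simp [h₁s i hi, h₂s i hi], ?_⟩
    rw [h₁e, h₂e, Finset.smul_sum, Finset.smul_sum, ← Finset.sum_add_distrib]
    apply Finset.sum_congr rfl
    intro i _
    rw [add_smul, mul_smul, mul_smul]
  have hclosed : IsClosed C := by
    have hrep : C = ⋃ s ∈ {s : Finset ι | s ⊆ J ∧ LinearIndependent ℝ (fun i : s => u i)},
        (Fintype.linearCombination ℝ (fun i : s => u i)) ''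
          {v : s → ℝ | ∀ i, 0 ≤ v i} := by
      ext y
      constructor
      · rintro ⟨lam, h1, h2, h3⟩
        obtain ⟨s, hsJ, hsind, lam', h1', h2', h3'⟩ := cone_caratheodory u J lam h1 h2
        refine Set.mem_biUnion (show s ∈ _ from ⟨hsJ, hsind⟩) ?_
        refine ⟨fun i => lam' i, fun i => h1' i, ?_⟩
        rw [Fintype.linearCombination_apply]
        rw [← sum_extend s (fun i => lam' i • u i) (fun i hi => by simp [h2' i hi])]
        rw [h3', ← h3]
      · intro hy
        simp only [Set.mem_iUnion, Set.mem_image, Set.mem_setOf_eq] at hy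
        obtain ⟨s, ⟨hsJ, _⟩, v, hv, hvy⟩ := hy
        refine ⟨fun i => if h : i ∈ s then v ⟨i, h⟩ else 0, ?_, ?_, ?_⟩
        · intro i
          by_cases h : i ∈ s
          · simpa [h] using hv ⟨i, h⟩
          · simp [h]
        · intro i hi
          have : i ∉ s := fun h => hi (hsJ h)
          simp [this]
        · rw [← hvy, Fintype.linearCombination_apply]
          rw [sum_extend s (fun i => (if h : i ∈ s then v ⟨i, h⟩ else 0) • u i)
            (fun i hi => by simp [hi])]
          apply Finset.sum_congr rfl
          intro i _
          simp [i.2]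
    rw [hrep]
    apply Set.Finite.isClosed_biUnion (Set.toFinite _)
    intro s hs
    have hemb := LinearMap.isClosedEmbedding_of_injective (ker_eq_bot_of_li u hs.2)
    apply hemb.isClosedMap
    have horth : {v : s → ℝ | ∀ i, 0 ≤ v i} = ⋂ i, {v : s → ℝ | 0 ≤ v i} :=
      Set.setOf_forall _
    rw [horth]
    exact isClosed_iInter (fun i => isClosed_le continuous_const (continuous_apply i))
  obtain ⟨f, u₀, hfa, hfw⟩ := geometric_hahn_banach_closed_point hconv hclosed hwC
  have hu₀ : 0 < u₀ := by have := hfa 0 h0C; simpa using this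
  have hfnonpos : ∀ y ∈ C, f y ≤ 0 := by
    intro y hy
    by_contra hpos
    push_neg at hpos
    have hyC : ((u₀ + 1) / f y) • y ∈ C := hsmul _ (by positivity) y hy
    have := hfa _ hyC
    rw [_root_.map_smul, smul_eq_mul, div_mul_cancel₀ _ (ne_of_gt hpos)] at this
    linarith
  set h := (InnerProductSpace.toDual ℝ E).symm f with hh
  have hkey : ∀ x : E, ⟪h, x⟫ = f x := fun x => InnerProductSpace.toDual_symm_apply
  have h1 : ∀ i ∈ J, ⟪u i, h⟫ ≤ 0 := by
    intro i hiJ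
    rw [real_inner_comm, hkey]
    apply hfnonpos
    refine ⟨fun j => if j = i then 1 else 0, fun j => by by_cases hji : j = i <;> simp [hji],
      fun j hj => by
        dsimp only
        exact if_neg (fun hji => hj (by rw [hji]; exact hiJ)), ?_⟩
    simp [ite_smul]
  have h2 := hw h h1
  rw [real_inner_comm, hkey] at h2
  linarith [hfw]
theorem hoffman_bound (u : ι → E) :
    ∃ H : ℝ, 0 < H ∧ ∀ (q : ι → ℝ) (r : ℝ), 0 ≤ r →
      ∀ x₀ : E, (∀ i, ⟪u i, x₀⟫ ≤ q i) →
      ∀ x : E, (∀ i, ⟪u i, x⟫ ≤ q i + r) →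
      ∃ y : E, (∀ i, ⟪u i, y⟫ ≤ q i) ∧ ‖x - y‖ ≤ H * r := by
  classical
  obtain ⟨K, hK, hKprop⟩ := exists_sum_bound u
  refine ⟨K, hK, ?_⟩
  intro q r hr x₀ hx₀ x hx
  set S : Set E := {y | ∀ i, ⟪u i, y⟫ ≤ q i} with hS
  have hSne : S.Nonempty := ⟨x₀, hx₀⟩
  have hSclosed : IsClosed S := by
    have : S = ⋂ i, {y : E | ⟪u i, y⟫ ≤ q i} := Set.setOf_forall _
    rw [this]
    exact isClosed_iInter fun i =>
      isClosed_le (Continuous.inner continuous_const continuous_id) continuous_const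
  have hSconv : Convex ℝ S := by
    intro y₁ h₁ y₂ h₂ a bb ha hb hab
    intro i
    have e : ⟪u i, a • y₁ + bb • y₂⟫ = a * ⟪u i, y₁⟫ + bb * ⟪u i, y₂⟫ := by
      rw [inner_add_right, real_inner_smul_right, real_inner_smul_right]
    show ⟪u i, a • y₁ + bb • y₂⟫ ≤ q i
    rw [e]
    calc a * ⟪u i, y₁⟫ + bb * ⟪u i, y₂⟫ ≤ a * q i + bb * q i :=
          add_le_add (mul_le_mul_of_nonneg_left (h₁ i) ha)
            (mul_le_mul_of_nonneg_left (h₂ i) hb)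
    _ = q i := by rw [← add_mul, hab, one_mul]
  obtain ⟨p, hpS, hpproj⟩ :=
    exists_norm_eq_iInf_of_complete_convex hSne hSclosed.isComplete hSconv x
  have hobtuse : ∀ y ∈ S, ⟪x - p, y - p⟫ ≤ 0 :=
    (norm_eq_iInf_iff_real_inner_le_zero hSconv hpS).1 hpproj
  set J : Finset ι := Finset.univ.filter (fun i => ⟪u i, p⟫ = q i) with hJ
  have hdual : ∀ h : E, (∀ i ∈ J, ⟪u i, h⟫ ≤ 0) → ⟪x - p, h⟫ ≤ 0 := by
    intro h hh
    have hslack : ∀ i, i ∉ J → ⟪u i, p⟫ < q i := by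
      intro i hi
      refine lt_of_le_of_ne (hpS i) ?_
      intro he
      exact hi (by simp [hJ, he])
    obtain ⟨t, htpos, htle⟩ : ∃ t : ℝ, 0 < t ∧
        ∀ i ∉ J, t * ⟪u i, h⟫ ≤ q i - ⟪u i, p⟫ := by
      by_cases hne : Nonempty ι
      · set f : ι → ℝ := fun i =>
          if i ∈ J then 1 else min 1 ((q i - ⟪u i, p⟫) / (|⟪u i, h⟫| + 1)) with hf
        have hfpos : ∀ i, 0 < f i := by
          intro i
          rw [hf]
          dsimp only
          split
          · exact one_pos
          · next hiJ =>
            refine lt_min one_pos (div_pos ?_ (by positivity))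
            have := hslack i hiJ
            linarith
        have htpos : 0 < Finset.univ.inf' Finset.univ_nonempty f :=
          (Finset.lt_inf'_iff _).2 fun i _ => hfpos i
        refine ⟨_, htpos, ?_⟩
        intro i hiJ
        have h1 : Finset.univ.inf' Finset.univ_nonempty f ≤ f i :=
          Finset.inf'_le f (Finset.mem_univ i)
        rw [hf] at h1
        simp only [if_neg hiJ] at h1
        have hs : 0 < q i - ⟪u i, p⟫ := by have := hslack i hiJ; linarith
        rcases le_or_gt ⟪u i, h⟫ 0 with ha | ha
        · have : Finset.univ.inf' Finset.univ_nonempty f * ⟪u i, h⟫ ≤ 0 :=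
            mul_nonpos_iff.2 (Or.inl ⟨htpos.le, ha⟩)
          linarith
        · have h2 : Finset.univ.inf' Finset.univ_nonempty f ≤
              (q i - ⟪u i, p⟫) / (⟪u i, h⟫ + 1) := by
            refine h1.trans ((min_le_right _ _).trans_eq ?_)
            rw [abs_of_pos ha]
          have h3 : Finset.univ.inf' Finset.univ_nonempty f * ⟪u i, h⟫ ≤
              ((q i - ⟪u i, p⟫) / (⟪u i, h⟫ + 1)) * ⟪u i, h⟫ :=
            mul_le_mul_of_nonneg_right h2 ha.le
          have h4 : ((q i - ⟪u i, p⟫) / (⟪u i, h⟫ + 1)) * ⟪u i, h⟫ ≤ q i - ⟪u i, p⟫ := by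
            rw [div_mul_eq_mul_div, div_le_iff₀ (by linarith)]
            nlinarith
          linarith
      · exact ⟨1, one_pos, fun i _ => absurd ⟨i⟩ hne⟩
    have hmem : p + t • h ∈ S := by
      intro i
      show ⟪u i, p + t • h⟫ ≤ q i
      rw [inner_add_right, real_inner_smul_right]
      by_cases hiJ : i ∈ J
      · have h1 : ⟪u i, p⟫ = q i := by simpa [hJ] using hiJ
        have h2 := hh i hiJ
        nlinarith
      · have := htle i hiJ
        linarith
    have h3 := hobtuse _ hmem
    rw [add_sub_cancel_left, real_inner_smul_right] at h3
    nlinarith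
  obtain ⟨lam, hlam0, hlamsupp, hlamsum⟩ := mem_cone_of_dual u J (x - p) hdual
  obtain ⟨s, hsJ, hsind, lam', h0', hsupp', hsum'⟩ := cone_caratheodory u J lam hlam0 hlamsupp
  have hwrep : x - p = ∑ i, lam' i • u i := by rw [hlamsum, ← hsum']
  have hKs := hKprop s hsind lam' hsupp'
  rw [← hwrep] at hKs
  have hexp : ⟪x - p, x - p⟫ = ∑ i, lam' i * ⟪u i, x - p⟫ := by
    nth_rewrite 1 [hwrep]
    rw [sum_inner]
    exact Finset.sum_congr rfl fun i _ => real_inner_smul_left _ _ _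
  have hterm : ∀ i, lam' i * ⟪u i, x - p⟫ ≤ lam' i * r := by
    intro i
    by_cases his : i ∈ s
    · have hiJ := hsJ his
      have hq : ⟪u i, p⟫ = q i := by simpa [hJ] using hiJ
      have hle : ⟪u i, x - p⟫ ≤ r := by
        rw [inner_sub_right, hq]
        linarith [hx i]
      exact mul_le_mul_of_nonneg_left hle (h0' i)
    · simp [hsupp' i his]
  have hfinal : ‖x - p‖ * ‖x - p‖ ≤ (K * r) * ‖x - p‖ := by
    calc ‖x - p‖ * ‖x - p‖ = ⟪x - p, x - p⟫ := (real_inner_self_eq_norm_mul_norm _).symm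
    _ ≤ ∑ i, lam' i * r := by
        rw [hexp]; exact Finset.sum_le_sum (fun i _ => hterm i)
    _ = (∑ i, lam' i) * r := by rw [← Finset.sum_mul]
    _ ≤ (K * ‖x - p‖) * r := mul_le_mul_of_nonneg_right hKs hr
    _ = (K * r) * ‖x - p‖ := by ring
  refine ⟨p, hpS, ?_⟩
  rcases eq_or_lt_of_le (norm_nonneg (x - p)) with h0 | hpos
  · rw [← h0]; exact mul_nonneg hK.le hr
  · exact le_of_mul_le_mul_right hfinal hpos

end LPStab

namespace LPStab
open scoped RealInnerProductSpace
open Matrix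

variable {m d : ℕ}

def toE {d : ℕ} (x : Fin d → ℝ) : EuclideanSpace ℝ (Fin d) := (WithLp.equiv 2 _).symm x

lemma inner_toE {d : ℕ} (f : Fin d → ℝ) (y : EuclideanSpace ℝ (Fin d)) :
    ⟪toE f, y⟫ = ∑ j, f j * y j := by
  rw [PiLp.inner_apply]
  refine Finset.sum_congr rfl fun j _ => ?_
  simp [RCLike.inner_apply, toE, mul_comm]

lemma abs_coord_le {n : ℕ} (w : EuclideanSpace ℝ (Fin n)) (j : Fin n) : |w j| ≤ ‖w‖ := by
  rw [EuclideanSpace.norm_eq]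
  rw [show |w j| = Real.sqrt (w j ^ 2) from (Real.sqrt_sq_eq_abs _).symm]
  apply Real.sqrt_le_sqrt
  have := Finset.single_le_sum (f := fun i => ‖w i‖ ^ 2) (fun i _ => sq_nonneg _)
    (Finset.mem_univ j)
  simpa [Real.norm_eq_abs, sq_abs] using this

lemma pi_norm_le_euc {n : ℕ} (w : EuclideanSpace ℝ (Fin n)) :
    ‖(fun j => w j : Fin n → ℝ)‖ ≤ ‖w‖ := by
  refine (pi_norm_le_iff_of_nonneg (norm_nonneg w)).2 fun j => ?_
  simpa [Real.norm_eq_abs] using abs_coord_le w j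

def rowsFeas (A : Matrix (Fin m) (Fin d) ℝ) :
    (Fin m ⊕ Fin m ⊕ Fin d) → EuclideanSpace ℝ (Fin d) :=
  Sum.elim (fun i => toE (A i))
    (Sum.elim (fun i => toE (-A i)) (fun j => toE (-Pi.single j 1)))

def qFeas (β : Fin m → ℝ) : (Fin m ⊕ Fin m ⊕ Fin d) → ℝ :=
  Sum.elim β (Sum.elim (-β) 0)

lemma inner_rowA (A : Matrix (Fin m) (Fin d) ℝ) (i : Fin m) (x : Fin d → ℝ) :
    ⟪rowsFeas A (Sum.inl i), toE x⟫ = (A *ᵥ x) i := by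
  rw [show rowsFeas A (Sum.inl i) = toE (A i) from rfl, inner_toE]
  simp [Matrix.mulVec, dotProduct, toE]

lemma inner_rowA' (A : Matrix (Fin m) (Fin d) ℝ) (i : Fin m) (x : Fin d → ℝ) :
    ⟪rowsFeas A (Sum.inr (Sum.inl i)), toE x⟫ = -(A *ᵥ x) i := by
  rw [show rowsFeas A (Sum.inr (Sum.inl i)) = toE (-A i) from rfl, inner_toE]
  simp [Matrix.mulVec, dotProduct, toE, Finset.sum_neg_distrib]

lemma inner_rowS (A : Matrix (Fin m) (Fin d) ℝ) (j : Fin d) (x : Fin d → ℝ) :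
    ⟪rowsFeas A (Sum.inr (Sum.inr j)), toE x⟫ = -x j := by
  rw [show rowsFeas A (Sum.inr (Sum.inr j)) = toE (-Pi.single j 1) from rfl, inner_toE]
  simp [Pi.single_apply, toE]

lemma rowsFeas_iff (A : Matrix (Fin m) (Fin d) ℝ) (β : Fin m → ℝ) (x : Fin d → ℝ) :
    (∀ i, ⟪rowsFeas A i, toE x⟫ ≤ qFeas β i) ↔ x ∈ feasSet A β := by
  constructor
  · intro h
    constructor
    · funext i
      have h1 := h (Sum.inl i)
      have h2 := h (Sum.inr (Sum.inl i))
      rw [inner_rowA] at h1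
      rw [inner_rowA'] at h2
      have h2' : -(A *ᵥ x) i ≤ -β i := h2
      have h1' : (A *ᵥ x) i ≤ β i := h1
      linarith
    · intro j
      have h3 := h (Sum.inr (Sum.inr j))
      rw [inner_rowS] at h3
      have h3' : -x j ≤ 0 := h3
      linarith
  · rintro ⟨hAx, hx0⟩ i
    rcases i with i | i | j
    · rw [inner_rowA, hAx]
      exact le_refl _
    · rw [inner_rowA', hAx]
      exact le_refl _
    · rw [inner_rowS]
      have := hx0 j
      show -x j ≤ (0 : ℝ)
      linarith

def rowsFull (A : Matrix (Fin m) (Fin d) ℝ) (c : Fin d → ℝ) :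
    ((Fin m ⊕ Fin m ⊕ Fin d) ⊕ Unit) → EuclideanSpace ℝ (Fin d) :=
  Sum.elim (rowsFeas A) (fun _ => toE c)

def qFull (β : Fin m → ℝ) (t : ℝ) : ((Fin m ⊕ Fin m ⊕ Fin d) ⊕ Unit) → ℝ :=
  Sum.elim (qFeas β) (fun _ => t)

lemma inner_c (c : Fin d → ℝ) (x : Fin d → ℝ) : ⟪toE c, toE x⟫ = c ⬝ᵥ x := by
  rw [inner_toE]; rfl

lemma hres_gen (A : Matrix (Fin m) (Fin d) ℝ) (β₁ β₂ : Fin m → ℝ) (x : Fin d → ℝ)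
    (hx : x ∈ feasSet A β₂) (r : ℝ) (hr0 : 0 ≤ r) (hr : ∀ i, |β₂ i - β₁ i| ≤ r) :
    ∀ i, ⟪rowsFeas A i, toE x⟫ ≤ qFeas β₁ i + r := by
  intro i
  rcases i with i | i | j
  · rw [inner_rowA, hx.1]
    have := abs_le.1 (hr i)
    show β₂ i ≤ β₁ i + r
    linarith [this.2]
  · rw [inner_rowA', hx.1]
    have := abs_le.1 (hr i)
    show -β₂ i ≤ -β₁ i + r
    linarith [this.1]
  · rw [inner_rowS]
    have := hx.2 j
    show -x j ≤ 0 + r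
    linarith

lemma lp_onesided (A : Matrix (Fin m) (Fin d) ℝ) (c : Fin d → ℝ) :
    ∃ C : ℝ, 0 < C ∧ ∀ β₁ β₂ : Fin m → ℝ, (optSet A β₁ c).Nonempty →
      (optSet A β₂ c).Nonempty →
      ∀ x ∈ optSet A β₁ c, ∃ y ∈ optSet A β₂ c, dist x y ≤ C * ‖β₁ - β₂‖ := by
  obtain ⟨H₁, hH₁, hprop₁⟩ := hoffman_bound (rowsFeas A)
  obtain ⟨H₂, hH₂, hprop₂⟩ := hoffman_bound (rowsFull A c)
  set c1 : ℝ := ∑ j, |c j| with hc1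
  have hc1nn : 0 ≤ c1 := Finset.sum_nonneg fun j _ => abs_nonneg _
  refine ⟨H₂ * (1 + c1 * H₁), by positivity, ?_⟩
  intro β₁ β₂ h1 h2 x hx
  obtain ⟨z, hz⟩ := h2
  set Δ : ℝ := ‖β₁ - β₂‖ with hΔdef
  have hΔ : 0 ≤ Δ := norm_nonneg _
  have hcoord : ∀ i, |β₁ i - β₂ i| ≤ Δ := by
    intro i
    have := norm_le_pi_norm (β₁ - β₂) i
    simpa [Real.norm_eq_abs] using this
  have hcoord' : ∀ i, |β₂ i - β₁ i| ≤ Δ := by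
    intro i
    rw [abs_sub_comm]
    exact hcoord i
  -- Step 1: project z onto the feasible set of β₁ to compare values
  obtain ⟨y₁, hy₁feas, hy₁dist⟩ := hprop₁ (qFeas β₁) Δ hΔ (toE x)
    ((rowsFeas_iff A β₁ x).2 hx.1) (toE z) (hres_gen A β₁ β₂ z hz.1 Δ hΔ hcoord')
  have hy₁mem : (fun j => y₁ j) ∈ feasSet A β₁ := (rowsFeas_iff A β₁ (fun j => y₁ j)).1 hy₁feas
  have habsle : ∀ (w : EuclideanSpace ℝ (Fin d)) (j : Fin d), |w j| ≤ ‖w‖ := abs_coord_le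
  have hvx : c ⬝ᵥ x ≤ c ⬝ᵥ z + c1 * (H₁ * Δ) := by
    have ha : c ⬝ᵥ x ≤ c ⬝ᵥ (fun j => y₁ j) := hx.2 _ hy₁mem
    have hb : c ⬝ᵥ (fun j => y₁ j) - c ⬝ᵥ z ≤ c1 * ‖toE z - y₁‖ := by
      have he : c ⬝ᵥ (fun j => y₁ j) - c ⬝ᵥ z = ∑ j, c j * (y₁ j - z j) := by
        simp [dotProduct, Finset.sum_sub_distrib, mul_sub]
      rw [he]
      calc ∑ j, c j * (y₁ j - z j) ≤ ∑ j, |c j * (y₁ j - z j)| :=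
            Finset.sum_le_sum fun j _ => le_abs_self _
      _ = ∑ j, |c j| * |y₁ j - z j| := by simp [abs_mul]
      _ ≤ ∑ j, |c j| * ‖toE z - y₁‖ := by
            refine Finset.sum_le_sum fun j _ => mul_le_mul_of_nonneg_left ?_ (abs_nonneg _)
            have : |y₁ j - z j| = |(toE z - y₁) j| := by
              rw [show (toE z - y₁) j = z j - y₁ j from rfl, abs_sub_comm]
            rw [this]
            exact habsle _ j
      _ = c1 * ‖toE z - y₁‖ := by rw [← Finset.sum_mul]
    have hcmul : c1 * ‖toE z - y₁‖ ≤ c1 * (H₁ * Δ) :=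
      mul_le_mul_of_nonneg_left hy₁dist hc1nn
    linarith
  -- Step 2: project x onto the optimal set of β₂
  set r : ℝ := (1 + c1 * H₁) * Δ with hrdef
  have hc1H : 0 ≤ c1 * H₁ := mul_nonneg hc1nn hH₁.le
  have hrnn : 0 ≤ r := mul_nonneg (by linarith) hΔ
  have hΔr : Δ ≤ r := by nlinarith
  have hx₀full : ∀ i, ⟪rowsFull A c i, toE z⟫ ≤ qFull β₂ (c ⬝ᵥ z) i := by
    intro i
    rcases i with i | u
    · exact (rowsFeas_iff A β₂ z).2 hz.1 i
    · show ⟪toE c, toE z⟫ ≤ c ⬝ᵥ z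
      rw [inner_c]
  have hres2 : ∀ i, ⟪rowsFull A c i, toE x⟫ ≤ qFull β₂ (c ⬝ᵥ z) i + r := by
    intro i
    rcases i with i | u
    · have := hres_gen A β₂ β₁ x hx.1 Δ hΔ hcoord i
      have h2 : qFeas β₂ i + Δ ≤ qFeas β₂ i + r := by linarith
      exact le_trans this h2
    · show ⟪toE c, toE x⟫ ≤ c ⬝ᵥ z + r
      rw [inner_c]
      have : c1 * (H₁ * Δ) ≤ r := by rw [hrdef]; nlinarith
      linarith
  obtain ⟨y, hyfeas, hydist⟩ := hprop₂ (qFull β₂ (c ⬝ᵥ z)) r hrnn (toE z) hx₀full (toE x) hres2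
  have hymem : (fun j => y j) ∈ feasSet A β₂ :=
    (rowsFeas_iff A β₂ (fun j => y j)).1 (fun i => hyfeas (Sum.inl i))
  have hcy : c ⬝ᵥ (fun j => y j) ≤ c ⬝ᵥ z := by
    have := hyfeas (Sum.inr ())
    rwa [show rowsFull A c (Sum.inr ()) = toE c from rfl,
      show ⟪toE c, y⟫ = c ⬝ᵥ (fun j => y j) from inner_c c (fun j => y j)] at this
  refine ⟨(fun j => y j), ⟨hymem, fun w hw => hcy.trans (hz.2 w hw)⟩, ?_⟩
  have hd1 : dist x (fun j => y j) = ‖(fun j => (toE x - y) j : Fin d → ℝ)‖ := by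
    rw [dist_eq_norm]
    rfl
  calc dist x (fun j => y j) = ‖(fun j => (toE x - y) j : Fin d → ℝ)‖ := hd1
  _ ≤ ‖toE x - y‖ := pi_norm_le_euc _
  _ ≤ H₂ * r := hydist
  _ = H₂ * (1 + c1 * H₁) * Δ := by rw [hrdef]; ring

lemma lp_hausdorff (A : Matrix (Fin m) (Fin d) ℝ) (c : Fin d → ℝ) :
    ∃ C : ℝ, 0 < C ∧ ∀ β₁ β₂ : Fin m → ℝ, (optSet A β₁ c).Nonempty →
      (optSet A β₂ c).Nonempty →
      Metric.hausdorffDist (optSet A β₁ c) (optSet A β₂ c) ≤ C * ‖β₁ - β₂‖ := by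
  obtain ⟨C, hC, hprop⟩ := lp_onesided A c
  refine ⟨C, hC, ?_⟩
  intro β₁ β₂ h1 h2
  apply Metric.hausdorffDist_le_of_mem_dist (mul_nonneg hC.le (norm_nonneg _))
  · intro x hx
    exact hprop β₁ β₂ h1 h2 x hx
  · intro y hy
    obtain ⟨x, hxmem, hd⟩ := hprop β₂ β₁ h2 h1 y hy
    refine ⟨x, hxmem, ?_⟩
    rwa [norm_sub_rev β₂ β₁] at hd

end LPStab

end LPMachinery

open MeasureTheory Filter Topology

/-- Theorem 3.3: assume (A1) `OPT(b)` is non-empty and bounded, (B2)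
`ℙ(OPT(b_n) ≠ ∅) → 1`, and `‖b_n − b‖ = O_ℙ(r_n⁻¹)`. Then the Hausdorff
distance between `OPT(b_n)` and `OPT(b)` satisfies
`d_H(OPT(b_n), OPT(b)) = O_ℙ(r_n⁻¹)`. -/
theorem stmt7 {Ω : Type*} [MeasurableSpace Ω] (P : Measure Ω) [IsProbabilityMeasure P]
    (hm : 1 ≤ m) (hmd : m ≤ d)
    (A : Matrix (Fin m) (Fin d) ℝ) (hA : A.rank = m)
    (b : Fin m → ℝ) (c : Fin d → ℝ)
    (hne : (optSet A b c).Nonempty) (hbd : Bornology.IsBounded (optSet A b c))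
    (bn : ℕ → Ω → Fin m → ℝ) (hbn : ∀ n, Measurable (bn n))
    (rn : ℕ → ℝ) (hrnpos : ∀ n, 0 < rn n) (hrn : Tendsto rn atTop atTop)
    (hfeas : Tendsto (fun n => P {ω | (optSet A (bn n ω) c).Nonempty}) atTop (𝓝 1))
    (hrate : ∀ ε : ENNReal, 0 < ε → ∃ M : ℝ, 0 < M ∧ ∃ N : ℕ, ∀ n ≥ N,
      P {ω | M < rn n * ‖bn n ω - b‖} < ε) :
    ∀ ε : ENNReal, 0 < ε → ∃ M : ℝ, 0 < M ∧ ∃ N : ℕ, ∀ n ≥ N,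
      P {ω | M < rn n *
          Metric.hausdorffDist (optSet A (bn n ω) c) (optSet A b c)} < ε := by
  intro ε hε
  obtain ⟨C, hC, hlip⟩ := LPStab.lp_hausdorff A c
  obtain ⟨M₀, hM₀, N₀, hN₀⟩ := hrate ε hε
  refine ⟨C * M₀, mul_pos hC hM₀, N₀, ?_⟩
  intro n hn
  refine lt_of_le_of_lt (measure_mono ?_) (hN₀ n hn)
  intro ω hω
  simp only [Set.mem_setOf_eq] at hω ⊢
  by_cases hopt : (optSet A (bn n ω) c).Nonempty
  · have hd := hlip (bn n ω) b hopt hne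
    have h1 : C * M₀ < rn n * (C * ‖bn n ω - b‖) :=
      lt_of_lt_of_le hω (mul_le_mul_of_nonneg_left hd (hrnpos n).le)
    rw [show rn n * (C * ‖bn n ω - b‖) = C * (rn n * ‖bn n ω - b‖) by ring] at h1
    exact (mul_lt_mul_iff_right₀ hC).1 h1
  · exfalso
    rw [Set.not_nonempty_iff_eq_empty.1 hopt, Metric.hausdorffDist_empty', mul_zero] at hω
    linarith [mul_pos hC hM₀]

end
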